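/- Let p be a continuously differentiable, everywhere positive probability density on ℝ^d satisfying p(x) ≤ C₁ exp(−C₂‖x‖²) and ‖∇ log p(x)‖ ≤ B + L‖x‖ for constants C₁, C₂, B, L > 0. Then for every t > 0 and every x ∈ ℝ^d, ∇ log p_t(x) = (1/α_t) ∫_{ℝ^d} ∇ log p(x₀) · q_t(x₀|x) dx₀, where q_t(x₀|x) := φ_t(x|x₀) p(x₀)/p_t(x) is the posterior density of x₀ given x_t = x. -/

import Mathlib

open MeasureTheory Real
open scoped BigOperators ENNReal

noncomputable section

/-- Euclidean space `ℝ^n`. -/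
abbrev Euc (n : ℕ) : Type := EuclideanSpace ℝ (Fin n)

/-- Membership in the unit cube `[0,1]^n`. -/
def inCube {n : ℕ} (w : Euc n) : Prop := ∀ i, w i ∈ Set.Icc (0 : ℝ) 1

/-- `α_t = e^{-t}`. -/
def ouAlpha (t : ℝ) : ℝ := Real.exp (-t)

/-- `σ_t² = 1 - e^{-2t}`. -/
def ouSigmaSq (t : ℝ) : ℝ := 1 - Real.exp (-2 * t)

/-- Gaussian transition density `φ_t(x'|x₀)` of the OU forward process. -/
def ouKernel (d : ℕ) (t : ℝ) (x' x₀ : Euc d) : ℝ :=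
  (2 * Real.pi * ouSigmaSq t) ^ (-(d : ℝ) / 2) *
    Real.exp (-‖x' - ouAlpha t • x₀‖ ^ 2 / (2 * ouSigmaSq t))

/-- Noised density `p_t(x') = ∫ φ_t(x'|x₀) p(x₀) dx₀`. -/
def noised (d : ℕ) (p : Euc d → ℝ) (t : ℝ) (x' : Euc d) : ℝ :=
  ∫ x₀, ouKernel d t x' x₀ * p x₀

/-- Score `∇ log p` of a density `p`. -/
def scoreOf (d : ℕ) (p : Euc d → ℝ) (x : Euc d) : Euc d :=
  gradient (fun z => Real.log (p z)) x

/-- Score `∇ log p_t` of the noised density. -/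
def noisedScore (d : ℕ) (p : Euc d → ℝ) (t : ℝ) (x : Euc d) : Euc d :=
  gradient (fun z => Real.log (noised d p t z)) x

/-- `∇_{x_t} log φ_t(x_t|x) = (α_t x - x_t)/σ_t²`. -/
def kernelScore (d : ℕ) (t : ℝ) (xt x : Euc d) : Euc d :=
  (ouSigmaSq t)⁻¹ • (ouAlpha t • x - xt)

/-! ### Auxiliary lemmas -/

lemma gauss_integrable {d : ℕ} {b : ℝ} (hb : 0 < b) :
    Integrable (fun v : Euc d => Real.exp (-b * ‖v‖ ^ 2)) := by
  have h := (GaussianFourier.integrable_cexp_neg_mul_sq_norm_add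
      (V := Euc d) (b := (b : ℂ)) (by simpa using hb) 0 0).re
  refine h.congr (Filter.Eventually.of_forall fun v => ?_)
  simp only [RCLike.re_to_complex, zero_mul, add_zero]
  rw [show (-(b:ℂ) * (‖v‖:ℂ)^2) = ((-(b * ‖v‖^2) : ℝ) : ℂ) by push_cast; ring,
    Complex.exp_ofReal_re]
  ring_nf

lemma change_var {d : ℕ} {V : Type*} [NormedAddCommGroup V] [NormedSpace ℝ V]
    {α : ℝ} (hα : 0 < α) (x : Euc d) (H : Euc d → V) :
    ∫ x₀, H x₀ = (α ^ d)⁻¹ • ∫ u, H (α⁻¹ • (x - u)) := by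
  have h1 : ∫ u, H (α⁻¹ • (x - u)) = ∫ y, H (α⁻¹ • y) :=
    integral_sub_left_eq_self (fun y => H (α⁻¹ • y)) volume x
  have h2 : ∫ y, H (α⁻¹ • y) = |((α⁻¹) ^ Module.finrank ℝ (Euc d))⁻¹| • ∫ y, H y :=
    MeasureTheory.Measure.integral_comp_smul volume H α⁻¹
  rw [h1, h2, finrank_euclideanSpace_fin]
  rw [show |((α⁻¹) ^ d)⁻¹| = α ^ d by
    rw [← inv_pow, inv_inv, abs_of_pos (pow_pos hα d)]]
  rw [smul_smul, inv_mul_cancel₀ (pow_pos hα d).ne', one_smul]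

lemma toDual_comp_smul_id {d : ℕ} (v : Euc d) (a : ℝ) :
    (InnerProductSpace.toDual ℝ (Euc d) v).comp
        (a • ContinuousLinearMap.id ℝ (Euc d))
      = InnerProductSpace.toDual ℝ (Euc d) (a • v) := by
  ext w
  simp [InnerProductSpace.toDual_apply_apply, real_inner_smul_left, real_inner_smul_right]

lemma hasGradientAt_log_comp {d : ℕ} {f : Euc d → ℝ} {g x : Euc d}
    (hf : HasGradientAt f g x) (hpos : 0 < f x) :
    HasGradientAt (fun z => Real.log (f z)) ((f x)⁻¹ • g) x := by
  have h1 : HasDerivAt Real.log (f x)⁻¹ (f x) := Real.hasDerivAt_log hpos.ne'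
  have h2 := h1.comp_hasFDerivAt x hf.hasFDerivAt
  rw [hasGradientAt_iff_hasFDerivAt]
  convert h2 using 1
  · rfl
  · rfl
  simp

lemma integrand_hasFDerivAt {d : ℕ} {p : Euc d → ℝ} (hp : Differentiable ℝ p)
    {α : ℝ} (c : ℝ) (u x : Euc d) :
    HasFDerivAt (fun x' => c * p (α⁻¹ • (x' - u)))
      (InnerProductSpace.toDual ℝ (Euc d)
        ((c * α⁻¹) • gradient p (α⁻¹ • (x - u)))) x := by
  have hinner : HasFDerivAt (fun x' : Euc d => α⁻¹ • (x' - u))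
      (α⁻¹ • ContinuousLinearMap.id ℝ (Euc d)) x :=
    ((hasFDerivAt_id x).sub_const u).const_smul α⁻¹
  have hgp : HasGradientAt p (gradient p (α⁻¹ • (x - u))) (α⁻¹ • (x - u)) :=
    (hp (α⁻¹ • (x - u))).hasGradientAt
  have hcomp := (hgp.hasFDerivAt.comp x hinner).const_mul c
  convert hcomp using 1
  any_goals rfl
  rw [toDual_comp_smul_id]
  ext w
  simp only [InnerProductSpace.toDual_apply_apply, real_inner_smul_left, ContinuousLinearMap.smul_apply,
    smul_eq_mul]
  ring

/-- The pointwise score relation: `∇p(y) = p(y) • ∇log p(y)`. -/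
lemma gradient_eq_smul_score {d : ℕ} {p : Euc d → ℝ} (hp : Differentiable ℝ p)
    (hppos : ∀ x, 0 < p x) (y : Euc d) :
    gradient p y = p y • scoreOf d p y := by
  have h : HasGradientAt (fun z => Real.log (p z)) ((p y)⁻¹ • gradient p y) y :=
    hasGradientAt_log_comp (hp y).hasGradientAt (hppos y)
  have : scoreOf d p y = (p y)⁻¹ • gradient p y := h.gradient
  rw [this, smul_smul, mul_inv_cancel₀ (hppos y).ne', one_smul]

/-- Uniform bound on `‖∇p‖` from the sub-Gaussian bound and the linear score growth. -/
lemma grad_bound {d : ℕ} {p : Euc d → ℝ} {C₁ C₂ B L : ℝ}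
    (hC₁ : 0 < C₁) (hC₂ : 0 < C₂) (hB : 0 < B) (hL : 0 < L)
    (hp : Differentiable ℝ p) (hppos : ∀ x, 0 < p x)
    (hbound : ∀ x, p x ≤ C₁ * Real.exp (-C₂ * ‖x‖ ^ 2))
    (hscore : ∀ x, ‖scoreOf d p x‖ ≤ B + L * ‖x‖) (y : Euc d) :
    ‖gradient p y‖ ≤ C₁ * B + C₁ * L * (1 + C₂⁻¹) := by
  have h1 : ‖gradient p y‖ = p y * ‖scoreOf d p y‖ := by
    rw [gradient_eq_smul_score hp hppos y, norm_smul, Real.norm_eq_abs,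
      abs_of_pos (hppos y)]
  set r := ‖y‖ with hr
  set E := Real.exp (-C₂ * r ^ 2) with hE
  have hr0 : 0 ≤ r := norm_nonneg y
  have hE0 : 0 < E := Real.exp_pos _
  have hE1 : E ≤ 1 := by
    rw [hE, Real.exp_le_one_iff]
    nlinarith [sq_nonneg r]
  have hE2 : E * (1 + C₂ * r ^ 2) ≤ 1 := by
    have h := Real.add_one_le_exp (C₂ * r ^ 2)
    have h' : E * Real.exp (C₂ * r ^ 2) = 1 := by
      rw [hE, ← Real.exp_add]; ring_nf; exact Real.exp_zero
    nlinarith [hE0]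
  have hd : 0 < 1 + C₂ * r ^ 2 := by nlinarith [sq_nonneg r]
  have hpy : p y ≤ C₁ * E := hbound y
  have h4 : r ≤ (1 + C₂⁻¹) * (1 + C₂ * r ^ 2) := by
    have hc : C₂⁻¹ * C₂ = 1 := inv_mul_cancel₀ hC₂.ne'
    have hci : 0 ≤ C₂⁻¹ := by positivity
    nlinarith [sq_nonneg (r - 1), sq_nonneg r]
  have hEr : E * r ≤ 1 + C₂⁻¹ := by
    have h5 : E * r * (1 + C₂ * r ^ 2) ≤ r := by nlinarith
    exact le_of_mul_le_mul_right (h5.trans (by nlinarith)) hd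
  have t1 : p y * B ≤ C₁ * B := by
    nlinarith [mul_le_mul_of_nonneg_right hpy hB.le,
      mul_le_mul_of_nonneg_left hE1 (mul_pos hC₁ hB).le]
  have t2 : p y * (L * r) ≤ C₁ * L * (1 + C₂⁻¹) := by
    have h6 : p y * r ≤ C₁ * (E * r) := by
      nlinarith [mul_le_mul_of_nonneg_right hpy hr0]
    nlinarith [mul_le_mul_of_nonneg_left h6 hL.le,
      mul_le_mul_of_nonneg_left hEr (mul_pos hL hC₁).le]
  have h7 : ‖scoreOf d p y‖ ≤ B + L * r := hscore y
  calc ‖gradient p y‖ = p y * ‖scoreOf d p y‖ := h1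
    _ ≤ p y * (B + L * r) := by nlinarith [(hppos y).le, norm_nonneg (scoreOf d p y)]
    _ = p y * B + p y * (L * r) := by ring
    _ ≤ C₁ * B + C₁ * L * (1 + C₂⁻¹) := by linarith

set_option maxHeartbeats 1000000 in

/-- For a `C¹`, positive, sub-Gaussian probability density `p` on `ℝ^d` whose
score grows at most linearly, the score of the noised density satisfies
`∇ log p_t(x) = (1/α_t) ∫ ∇ log p(x₀) q_t(x₀|x) dx₀`,
where `q_t(x₀|x) = φ_t(x|x₀) p(x₀) / p_t(x)` is the posterior density of `x₀` given `x_t = x`. -/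
theorem stmt1 (d : ℕ) (C₁ C₂ B L : ℝ) (hC₁ : 0 < C₁) (hC₂ : 0 < C₂) (hB : 0 < B) (hL : 0 < L)
    (p : Euc d → ℝ) (hp1 : ContDiff ℝ 1 p) (hppos : ∀ x, 0 < p x)
    (hpint : (∫ x, p x) = 1)
    (hbound : ∀ x, p x ≤ C₁ * Real.exp (-C₂ * ‖x‖ ^ 2))
    (hscore : ∀ x, ‖scoreOf d p x‖ ≤ B + L * ‖x‖) :
    ∀ t : ℝ, 0 < t → ∀ x : Euc d,
      noisedScore d p t x
        = (ouAlpha t)⁻¹ •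
            ∫ x₀, (ouKernel d t x x₀ * p x₀ / noised d p t x) • scoreOf d p x₀ := by
  intro t ht x
  set α := ouAlpha t with hαdef
  have hα : 0 < α := Real.exp_pos _
  have hσ : 0 < ouSigmaSq t := by
    have h : Real.exp (-2 * t) < 1 := by
      rw [Real.exp_lt_one_iff]; linarith
    simp only [ouSigmaSq]; linarith
  set σ2 := ouSigmaSq t with hσdef
  set c : ℝ := (2 * Real.pi * σ2) ^ (-(d : ℝ) / 2) with hcdef
  have hc : 0 < c := Real.rpow_pos_of_pos (by positivity) _
  set b : ℝ := (2 * σ2)⁻¹ with hbdef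
  have hb : 0 < b := by positivity
  set G : Euc d → ℝ := fun u => c * Real.exp (-b * ‖u‖ ^ 2) with hGdef
  have hGpos : ∀ u, 0 < G u := fun u => mul_pos hc (Real.exp_pos _)
  have hGle : ∀ u, G u ≤ c := fun u => by
    have h1 : Real.exp (-b * ‖u‖ ^ 2) ≤ 1 := by
      rw [Real.exp_le_one_iff]; nlinarith [sq_nonneg ‖u‖, hb]
    show c * Real.exp (-b * ‖u‖ ^ 2) ≤ c
    exact mul_le_of_le_one_right hc.le h1
  have hGker : ∀ x' x₀ : Euc d, ouKernel d t x' x₀ = G (x' - α • x₀) := by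
    intro x' x₀
    simp only [ouKernel, hGdef, ← hαdef, ← hσdef, ← hcdef]
    congr 1
    rw [hbdef]
    field_simp
  have hGcont : Continuous G :=
    continuous_const.mul (Real.continuous_exp.comp
      (continuous_const.mul (continuous_norm.pow 2)))
  have hGint : Integrable G := (gauss_integrable hb).const_mul c
  have hp' : Differentiable ℝ p := hp1.differentiable one_ne_zero
  have hpcont : Continuous p := hp1.continuous
  have hgcont : Continuous (fun y => gradient p y) := by
    have h := hp1.continuous_fderiv one_ne_zero
    exact (InnerProductSpace.toDual ℝ (Euc d)).symm.continuous.comp h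
  set M : ℝ := C₁ * B + C₁ * L * (1 + C₂⁻¹) with hMdef
  have hM : ∀ y, ‖gradient p y‖ ≤ M :=
    grad_bound hC₁ hC₂ hB hL hp' hppos hbound hscore
  have hpleC : ∀ y, p y ≤ C₁ := fun y => by
    have h := hbound y
    have h2 : Real.exp (-C₂ * ‖y‖ ^ 2) ≤ 1 := by
      rw [Real.exp_le_one_iff]; nlinarith [sq_nonneg ‖y‖]
    nlinarith
  -- integrability of the kernel integrand
  have hker_int : ∀ x' : Euc d, Integrable (fun x₀ => ouKernel d t x' x₀ * p x₀) := by
    intro x'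
    refine Integrable.mono' (((gauss_integrable hC₂).const_mul (c * C₁)))
      ?_ (Filter.Eventually.of_forall fun x₀ => ?_)
    · have hcont : Continuous (fun x₀ : Euc d => ouKernel d t x' x₀ * p x₀) := by
        have : Continuous (fun x₀ : Euc d => G (x' - α • x₀)) :=
          hGcont.comp (continuous_const.sub (continuous_id.const_smul α))
        simp_rw [hGker]
        exact this.mul hpcont
      exact hcont.aestronglyMeasurable
    · rw [Real.norm_eq_abs, hGker,
        abs_of_nonneg (mul_nonneg (hGpos _).le (hppos _).le)]
      calc G (x' - α • x₀) * p x₀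
          ≤ c * (C₁ * Real.exp (-C₂ * ‖x₀‖ ^ 2)) := by
            apply mul_le_mul (hGle _) (hbound _) (hppos _).le hc.le
        _ = c * C₁ * Real.exp (-C₂ * ‖x₀‖ ^ 2) := by ring
  -- positivity of the noised density
  have hnpos : ∀ x' : Euc d, 0 < noised d p t x' := by
    intro x'
    rw [show noised d p t x' = ∫ x₀, ouKernel d t x' x₀ * p x₀ from rfl]
    rw [integral_pos_iff_support_of_nonneg
      (fun x₀ => mul_nonneg (by rw [hGker]; exact (hGpos _).le) (hppos _).le)
      (hker_int x')]
    have hsupp : (Function.support fun x₀ => ouKernel d t x' x₀ * p x₀) = Set.univ := by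
      ext x₀
      simp only [Function.mem_support, Set.mem_univ, iff_true]
      exact (mul_pos (by rw [hGker]; exact hGpos _) (hppos _)).ne'
    rw [hsupp]
    exact isOpen_univ.measure_pos volume ⟨0, trivial⟩
  -- the vector integrand
  set Φ : Euc d → Euc d := fun u => (G u * α⁻¹) • gradient p (α⁻¹ • (x - u)) with hΦdef
  have hΦcont : Continuous Φ := by
    apply Continuous.smul (hGcont.mul continuous_const)
    exact hgcont.comp ((continuous_const.sub continuous_id).const_smul α⁻¹)
  have hΦnorm : ∀ (x' u : Euc d),
      ‖(G u * α⁻¹) • gradient p (α⁻¹ • (x' - u))‖ ≤ G u * (α⁻¹ * M) := by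
    intro x' u
    rw [norm_smul, Real.norm_eq_abs,
      abs_of_nonneg (mul_nonneg (hGpos u).le (by positivity))]
    calc G u * α⁻¹ * ‖gradient p (α⁻¹ • (x' - u))‖
        ≤ G u * α⁻¹ * M := by
          apply mul_le_mul_of_nonneg_left (hM _)
          positivity
      _ = G u * (α⁻¹ * M) := by ring
  have hΦint : Integrable Φ := by
    refine Integrable.mono' (hGint.mul_const (α⁻¹ * M))
      hΦcont.aestronglyMeasurable (Filter.Eventually.of_forall fun u => hΦnorm x u)
  set F' : Euc d → Euc d → (Euc d →L[ℝ] ℝ) := fun x' u =>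
    InnerProductSpace.toDual ℝ (Euc d) ((G u * α⁻¹) • gradient p (α⁻¹ • (x' - u)))
    with hF'def
  have hF'norm : ∀ x' u, ‖F' x' u‖ = ‖(G u * α⁻¹) • gradient p (α⁻¹ • (x' - u))‖ :=
    fun x' u => (InnerProductSpace.toDual ℝ (Euc d)).norm_map _
  have key : HasFDerivAt (fun x' => ∫ u, G u * p (α⁻¹ • (x' - u))) (∫ u, F' x u) x := by
    apply hasFDerivAt_integral_of_dominated_of_fderiv_le
      (s := Metric.ball x 1) (bound := fun u => G u * (α⁻¹ * M)) (Metric.ball_mem_nhds x one_pos)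
    · apply Filter.Eventually.of_forall
      intro x'
      have : Continuous (fun u : Euc d => G u * p (α⁻¹ • (x' - u))) :=
        hGcont.mul (hpcont.comp ((continuous_const.sub continuous_id).const_smul α⁻¹))
      exact this.aestronglyMeasurable
    · refine Integrable.mono' (hGint.mul_const C₁)
        ?_ (Filter.Eventually.of_forall fun u => ?_)
      · exact (hGcont.mul (hpcont.comp
          ((continuous_const.sub continuous_id).const_smul α⁻¹))).aestronglyMeasurable
      · rw [Real.norm_eq_abs, abs_of_nonneg (mul_nonneg (hGpos u).le (hppos _).le)]
        exact mul_le_mul_of_nonneg_left (hpleC _) (hGpos u).le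
    · have : Continuous (F' x) :=
        (InnerProductSpace.toDual ℝ (Euc d)).continuous.comp hΦcont
      exact this.aestronglyMeasurable
    · apply Filter.Eventually.of_forall
      intro u x' _
      rw [hF'norm]
      exact hΦnorm x' u
    · exact hGint.mul_const (α⁻¹ * M)
    · apply Filter.Eventually.of_forall
      intro u x' _
      exact integrand_hasFDerivAt hp' (G u) u x'
  have hF'x_int : Integrable (F' x) := by
    refine Integrable.mono' (hGint.mul_const (α⁻¹ * M))
      ((InnerProductSpace.toDual ℝ (Euc d)).continuous.comp hΦcont).aestronglyMeasurable
      (Filter.Eventually.of_forall fun u => ?_)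
    rw [hF'norm]
    exact hΦnorm x u
  have hF'int : ∫ u, F' x u = InnerProductSpace.toDual ℝ (Euc d) (∫ u, Φ u) := by
    apply ContinuousLinearMap.ext
    intro v
    rw [ContinuousLinearMap.integral_apply hF'x_int]
    simp only [hF'def, InnerProductSpace.toDual_apply_apply]
    calc (∫ u, (inner ℝ ((G u * α⁻¹) • gradient p (α⁻¹ • (x - u))) v : ℝ))
        = ∫ u, (inner ℝ v (Φ u) : ℝ) := by
          congr 1; funext u; rw [real_inner_comm]
      _ = inner ℝ v (∫ u, Φ u) := integral_inner hΦint v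
      _ = inner ℝ (∫ u, Φ u) v := real_inner_comm _ _
  have hSim : ∀ x' u : Euc d, x' - α • (α⁻¹ • (x' - u)) = u := by
    intro x' u
    rw [smul_inv_smul₀ hα.ne', sub_sub_cancel]
  -- the noised density in convolution form
  have hNf : ∀ x' : Euc d,
      noised d p t x' = (α ^ d)⁻¹ * ∫ u, G u * p (α⁻¹ • (x' - u)) := by
    intro x'
    have h := change_var (V := ℝ) hα x' (fun x₀ => G (x' - α • x₀) * p x₀)
    calc noised d p t x' = ∫ x₀, G (x' - α • x₀) * p x₀ := by
          rw [show noised d p t x' = ∫ x₀, ouKernel d t x' x₀ * p x₀ from rfl]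
          congr 1; funext x₀; rw [hGker]
      _ = (α ^ d)⁻¹ • ∫ u, G (x' - α • (α⁻¹ • (x' - u))) * p (α⁻¹ • (x' - u)) := h
      _ = (α ^ d)⁻¹ * ∫ u, G u * p (α⁻¹ • (x' - u)) := by
          rw [smul_eq_mul]
          simp_rw [hSim]
  -- gradient of the noised density
  have hNg : HasGradientAt (noised d p t) ((α ^ d)⁻¹ • ∫ u, Φ u) x := by
    rw [hasGradientAt_iff_hasFDerivAt]
    have h2 := key.const_mul ((α ^ d)⁻¹)
    have heq : (fun x' => (α ^ d)⁻¹ * ∫ u, G u * p (α⁻¹ • (x' - u))) = noised d p t := by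
      funext x'; rw [hNf x']
    rw [heq] at h2
    have hsm : ((α ^ d)⁻¹ : ℝ) • (∫ u, F' x u)
        = InnerProductSpace.toDual ℝ (Euc d) ((α ^ d)⁻¹ • ∫ u, Φ u) := by
      rw [hF'int]
      ext w
      simp only [InnerProductSpace.toDual_apply_apply, ContinuousLinearMap.smul_apply,
        real_inner_smul_left, smul_eq_mul]
    rw [← hsm]
    exact h2
  -- change variables back for the vector integral
  have hΦval : (∫ x₀, (G (x - α • x₀) * α⁻¹) • gradient p x₀) = (α ^ d)⁻¹ • ∫ u, Φ u := by
    have h := change_var (V := Euc d) hα x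
      (fun x₀ => (G (x - α • x₀) * α⁻¹) • gradient p x₀)
    rw [h]
    congr 1
    congr 1
    funext u
    rw [hSim]
  -- assemble
  have hgrad : noisedScore d p t x
      = (noised d p t x)⁻¹ • ((α ^ d)⁻¹ • ∫ u, Φ u) :=
    (hasGradientAt_log_comp hNg (hnpos x)).gradient
  rw [hgrad, ← hΦval]
  have hrw : ∀ x₀ : Euc d, (G (x - α • x₀) * α⁻¹) • gradient p x₀
      = α⁻¹ • ((ouKernel d t x x₀ * p x₀) • scoreOf d p x₀) := by
    intro x₀
    rw [gradient_eq_smul_score hp' hppos, hGker, smul_smul, smul_smul]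
    congr 1
    ring
  simp_rw [hrw]
  rw [integral_smul]
  have hrw2 : ∀ x₀ : Euc d, (ouKernel d t x x₀ * p x₀ / noised d p t x) • scoreOf d p x₀
      = (noised d p t x)⁻¹ • ((ouKernel d t x x₀ * p x₀) • scoreOf d p x₀) := by
    intro x₀
    rw [smul_smul, div_eq_inv_mul]
  simp_rw [hrw2]
  rw [integral_smul]
  rw [smul_comm]
end
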